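/- For every positive integer n, the convex hull Δ ⊆ ℝⁿ of the even vertices of the hypercube [0,1]ⁿ equals the set of points x ∈ ℝⁿ satisfying 0 ≤ x_i ≤ 1 for all i ∈ {1,…,n} and H_I(x) ≥ 1 for every subset I ⊆ {1,…,n} of odd cardinality. -/

import Mathlib

open Finset

/-- Indicator vector of a subset `I ⊆ {1,…,n}` in `ℝⁿ`. -/
def xi {n : ℕ} (I : Finset (Fin n)) : Fin n → ℝ := fun i => if i ∈ I then 1 else 0

/-- The affine function `H_I(x) = ∑_{j∉I} x_j + ∑_{i∈I} (1 − x_i)`. -/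
def Hfun {n : ℕ} (I : Finset (Fin n)) (x : Fin n → ℝ) : ℝ :=
  ∑ j ∈ Iᶜ, x j + ∑ i ∈ I, (1 - x i)

/-- The demi-hypercube: convex hull of the even vertices of `[0,1]ⁿ`. -/
def DemiCube (n : ℕ) : Set (Fin n → ℝ) :=
  convexHull ℝ {x : Fin n → ℝ | ∃ I : Finset (Fin n), Even I.card ∧ x = xi I}

lemma card_symmDiff_eq {α : Type*} [DecidableEq α] (s t : Finset α) :
    (symmDiff s t).card = (s \ t).card + (t \ s).card := by
  rw [symmDiff_def]
  exact card_union_of_disjoint disjoint_sdiff_sdiff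

lemma symmDiff_parity {α : Type*} [DecidableEq α] (s t : Finset α)
    (hs : Odd s.card) (ht : Even t.card) : Odd (symmDiff s t).card := by
  have h1 := card_symmDiff_eq s t
  have h2 := Finset.card_sdiff_add_card_inter s t
  have h3 := Finset.card_sdiff_add_card_inter t s
  rw [Finset.inter_comm] at h3
  rw [Nat.odd_iff] at hs ⊢
  rw [Nat.even_iff] at ht
  omega

lemma Hfun_eq_sum {n : ℕ} (K : Finset (Fin n)) (x : Fin n → ℝ) :
    Hfun K x = ∑ l ∈ univ, (if l ∈ K then 1 - x l else x l) := by
  rw [← Finset.sum_add_sum_compl K]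
  unfold Hfun
  rw [add_comm]
  congr 1
  · exact Finset.sum_congr rfl (fun l hl => by simp [hl])
  · exact Finset.sum_congr rfl (fun l hl => by simp [Finset.mem_compl.mp hl])

lemma Hfun_affine {n : ℕ} (K : Finset (Fin n)) (x y : Fin n → ℝ) (a b : ℝ) (h : a + b = 1) :
    Hfun K (a • x + b • y) = a * Hfun K x + b * Hfun K y := by
  simp only [Hfun_eq_sum]
  rw [Finset.mul_sum, Finset.mul_sum, ← Finset.sum_add_distrib]
  refine Finset.sum_congr rfl (fun l _ => ?_)
  have hb : b = 1 - a := by linarith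
  subst hb
  by_cases hl : l ∈ K <;> simp [hl, Pi.add_apply, Pi.smul_apply, smul_eq_mul] <;> ring

lemma Hfun_xi {n : ℕ} (K I : Finset (Fin n)) :
    Hfun K (xi I) = ((symmDiff K I).card : ℝ) := by
  have h1 : ∑ j ∈ Kᶜ, xi I j = (((I \ K)).card : ℝ) := by
    have h : Kᶜ ∩ I = I \ K := by ext a; simp [and_comm]
    simp [xi, Finset.sum_ite_mem, h]
  have h2 : ∑ i ∈ K, (1 - xi I i) = ((K \ I).card : ℝ) := by
    have h4 : K ∩ I = K \ (K \ I) := by ext a; simp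
    have h5 : (K \ I) ⊆ K := sdiff_subset
    have h3 : (K \ I).card + (K ∩ I).card = K.card := by
      have h6 := Finset.card_le_card h5
      rw [h4, card_sdiff_of_subset h5]; omega
    rw [Finset.sum_sub_distrib]
    simp only [xi, Finset.sum_ite_mem, Finset.sum_const, Finset.sum_boole]
    rw [← h3]
    push_cast
    simp [Finset.sum_ite_mem]
    push_cast [← h3]
    ring
  rw [Hfun, h1, h2, card_symmDiff_eq]
  push_cast; ring

/-- set of fractional coordinates -/
noncomputable def fracs {n : ℕ} (x : Fin n → ℝ) : Finset (Fin n) :=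
  univ.filter (fun l => x l ≠ 0 ∧ x l ≠ 1)

/-- set of odd constraints that are not tight -/
noncomputable def loose {n : ℕ} (x : Fin n → ℝ) : Finset (Finset (Fin n)) :=
  univ.filter (fun K => Odd K.card ∧ Hfun K x ≠ 1)

noncomputable def meas {n : ℕ} (x : Fin n → ℝ) : ℕ := (fracs x).card * (2 ^ n + 1) + (loose x).card

lemma loose_card_le {n : ℕ} (x : Fin n → ℝ) : (loose x).card ≤ 2 ^ n := by
  calc (loose x).card ≤ (univ : Finset (Finset (Fin n))).card := card_filter_le _ _
    _ = 2 ^ n := by simp [Finset.card_univ, Fintype.card_finset]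

lemma hard_dir {n : ℕ} (hn : 0 < n) :
    ∀ N (x : Fin n → ℝ), meas x ≤ N → (∀ i, 0 ≤ x i ∧ x i ≤ 1) →
      (∀ K : Finset (Fin n), Odd K.card → 1 ≤ Hfun K x) → x ∈ DemiCube n := by
  intro N
  induction N using Nat.strong_induction_on with
  | _ N ih =>
  intro x hmx hbox hcons
  by_cases hint : ∀ l, x l = 0 ∨ x l = 1
  · -- integral case
    set Ix : Finset (Fin n) := univ.filter (fun l => x l = 1) with hIx
    have hx : x = xi Ix := by
      funext l
      rcases hint l with h | h <;> simp [xi, hIx, h]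
    have hev : Even Ix.card := by
      by_contra hodd
      rw [Nat.not_even_iff_odd] at hodd
      have h1 := hcons Ix hodd
      have h0 : Hfun Ix x = 0 := by
        rw [Hfun_eq_sum]
        apply Finset.sum_eq_zero
        intro l _
        by_cases hl : l ∈ Ix
        · simp only [hl, if_true]
          have : x l = 1 := (mem_filter.mp hl).2
          linarith
        · simp only [hl, if_false]
          rcases hint l with h | h
          · exact h
          · exact absurd (mem_filter.mpr ⟨mem_univ l, h⟩) hl
      linarith
    exact subset_convexHull ℝ _ ⟨Ix, hev, hx⟩
  · -- fractional case
    push_neg at hint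
    obtain ⟨m, hm0', hm1'⟩ := hint
    have hm0 : 0 < x m := lt_of_le_of_ne (hbox m).1 (Ne.symm hm0')
    have hm1 : x m < 1 := lt_of_le_of_ne (hbox m).2 hm1'
    set J : Finset (Fin n) := (univ.filter (fun l => (1:ℝ)/2 < x l)).erase m with hJ
    set I : Finset (Fin n) := if Even J.card then J else insert m J with hIdef
    have hmJ : m ∉ J := notMem_erase _ _
    have hIeven : Even I.card := by
      rw [hIdef]
      split_ifs with h
      · exact h
      · rw [card_insert_of_notMem hmJ]
        rw [Nat.not_even_iff_odd] at h
        exact Odd.add_one h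
    have hImem : ∀ l, l ≠ m → (l ∈ I ↔ (1:ℝ)/2 < x l) := by
      intro l hl
      rw [hIdef]
      split_ifs with h
      · rw [hJ]; simp [hl]
      · rw [mem_insert, hJ]; simp [hl]
    -- Claim A
    have claimA : ∀ K : Finset (Fin n), Odd K.card →
        (symmDiff K I).card = 1 ∨ (3 ≤ (symmDiff K I).card ∧ 1 < Hfun K x) := by
      intro K hK
      have hodd : Odd (symmDiff K I).card := symmDiff_parity K I hK hIeven
      by_cases hc : (symmDiff K I).card = 1
      · exact Or.inl hc
      right
      have hc3 : 3 ≤ (symmDiff K I).card := by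
        rcases hodd with ⟨k, hk⟩
        omega
      refine ⟨hc3, ?_⟩
      set D := symmDiff K I with hD
      set term : Fin n → ℝ := fun l => if l ∈ K then 1 - x l else x l with hterm
      have hsum : Hfun K x = ∑ l ∈ univ, term l := Hfun_eq_sum K x
      have hnn : ∀ l, 0 ≤ term l := by
        intro l
        rw [hterm]
        by_cases hl : l ∈ K <;> simp [hl] <;> [linarith [(hbox l).2]; exact (hbox l).1]
      have hhalf : ∀ l ∈ D, l ≠ m → (1:ℝ)/2 ≤ term l := by
        intro l hl hlm
        rw [hD, Finset.mem_symmDiff] at hl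
        rcases hl with ⟨hlK, hlI⟩ | ⟨hlI, hlK⟩
        · have : ¬ ((1:ℝ)/2 < x l) := fun h => hlI ((hImem l hlm).mpr h)
          push_neg at this
          simp [hterm, hlK]; linarith
        · have : (1:ℝ)/2 < x l := (hImem l hlm).mp hlI
          simp [hterm, hlK]; linarith
      have hDsub : Hfun K x ≥ ∑ l ∈ D, term l := by
        rw [hsum]
        exact Finset.sum_le_sum_of_subset_of_nonneg (subset_univ D)
          (fun l _ _ => hnn l)
      by_cases hmD : m ∈ D
      · have h1 : ∑ l ∈ D, term l = term m + ∑ l ∈ D.erase m, term l :=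
          (Finset.add_sum_erase D term hmD).symm
        have h2 : 2 ≤ (D.erase m).card := by
          rw [card_erase_of_mem hmD]; omega
        have h3 : (D.erase m).card • ((1:ℝ)/2) ≤ ∑ l ∈ D.erase m, term l := by
          apply Finset.card_nsmul_le_sum
          intro l hl
          exact hhalf l (mem_of_mem_erase hl) (ne_of_mem_erase hl)
        have h4 : (1:ℝ) ≤ ∑ l ∈ D.erase m, term l := by
          have : (2:ℝ) * (1/2) ≤ ((D.erase m).card : ℝ) * (1/2) := by
            apply mul_le_mul_of_nonneg_right _ (by norm_num)
            exact_mod_cast h2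
          rw [nsmul_eq_mul] at h3
          linarith
        have htm : 0 < term m := by
          rw [hterm]
          by_cases hmK : m ∈ K <;> simp [hmK] <;> linarith
        linarith
      · have h3 : (D.card : ℝ) * (1/2) ≤ ∑ l ∈ D, term l := by
          have := Finset.card_nsmul_le_sum D term (1/2)
            (fun l hl => hhalf l hl (fun he => hmD (he ▸ hl)))
          rwa [nsmul_eq_mul] at this
        have : (3:ℝ) * (1/2) ≤ (D.card : ℝ) * (1/2) := by
          apply mul_le_mul_of_nonneg_right _ (by norm_num)
          exact_mod_cast hc3
        linarith
    -- the step parameter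
    set t' : Fin n → ℝ := fun l => if l ∈ I then x l else 1 - x l with ht'
    have ht'pos : ∀ l, 0 < t' l := by
      intro l
      by_cases hlm : l = m
      · subst hlm
        rw [ht']
        by_cases h : l ∈ I <;> simp [h] <;> linarith
      · by_cases h : l ∈ I
        · have := (hImem l hlm).mp h
          simp [ht', h]; linarith
        · have : ¬ ((1:ℝ)/2 < x l) := fun hh => h ((hImem l hlm).mpr hh)
          push_neg at this
          simp [ht', h]; linarith
    have ht'm1 : t' m < 1 := by
      rw [ht']
      by_cases h : m ∈ I <;> simp [h] <;> linarith
    set gfun : Finset (Fin n) → ℝ :=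
      fun K => (Hfun K x - 1) / (((symmDiff K I).card : ℝ) - 1) with hg
    set gset : Finset (Finset (Fin n)) :=
      univ.filter (fun K => Odd K.card ∧ 3 ≤ (symmDiff K I).card) with hgset
    set A : Finset ℝ := (univ.image t') ∪ (gset.image gfun) with hA
    have hAne : A.Nonempty := by
      refine Finset.Nonempty.mono (Finset.subset_union_left) ?_
      exact (Finset.univ_nonempty_iff.mpr ⟨⟨0, hn⟩⟩).image t'
    set lam : ℝ := A.min' hAne with hlamdef
    have hlam_le_t' : ∀ l, lam ≤ t' l := fun l =>
      Finset.min'_le A _ (Finset.mem_union_left _ (mem_image_of_mem t' (mem_univ l)))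
    have hlam_le_g : ∀ K ∈ gset, lam ≤ gfun K := fun K hK =>
      Finset.min'_le A _ (Finset.mem_union_right _ (mem_image_of_mem gfun hK))
    have hgsetlt : ∀ K ∈ gset, 1 < Hfun K x ∧ 3 ≤ (symmDiff K I).card ∧ Odd K.card := by
      intro K hK
      rw [hgset, mem_filter] at hK
      obtain ⟨-, hKo, hK3⟩ := hK
      rcases claimA K hKo with h | ⟨h3, hlt⟩
      · omega
      · exact ⟨hlt, h3, hKo⟩
    have hlam_pos : 0 < lam := by
      have hmem : lam ∈ (univ.image t') ∪ (gset.image gfun) := Finset.min'_mem A hAne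
      rcases Finset.mem_union.mp hmem with h | h
      · obtain ⟨l, -, hl⟩ := Finset.mem_image.mp h
        exact hl ▸ ht'pos l
      · obtain ⟨K, hK, hl⟩ := Finset.mem_image.mp h
        obtain ⟨hlt, h3, -⟩ := hgsetlt K hK
        rw [← hl, hg]
        apply div_pos (by linarith)
        have : (3:ℝ) ≤ ((symmDiff K I).card : ℝ) := by exact_mod_cast h3
        linarith
    have hlam1 : lam < 1 := lt_of_le_of_lt (hlam_le_t' m) ht'm1
    have h1lam : 0 < 1 - lam := by linarith
    -- the new point y
    set y : Fin n → ℝ := fun l => (x l - lam * xi I l) / (1 - lam) with hy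
    have hxy : x = lam • xi I + (1 - lam) • y := by
      funext l
      simp only [Pi.add_apply, Pi.smul_apply, smul_eq_mul, hy]
      field_simp
      ring
    have haff : ∀ K : Finset (Fin n),
        Hfun K x = lam * ((symmDiff K I).card : ℝ) + (1 - lam) * Hfun K y := by
      intro K
      conv_lhs => rw [hxy]
      rw [Hfun_affine K (xi I) y lam (1 - lam) (by ring), Hfun_xi]
    have ybox : ∀ l, 0 ≤ y l ∧ y l ≤ 1 := by
      intro l
      rw [hy]
      by_cases hl : l ∈ I
      · have h1 : lam ≤ x l := by simpa [ht', hl] using hlam_le_t' l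
        simp only [xi, if_pos hl, mul_one]
        constructor
        · exact div_nonneg (by linarith) h1lam.le
        · rw [div_le_one h1lam]; linarith [(hbox l).2]
      · have h1 : lam ≤ 1 - x l := by simpa [ht', hl] using hlam_le_t' l
        simp only [xi, if_neg hl, mul_zero, sub_zero]
        constructor
        · exact div_nonneg (hbox l).1 h1lam.le
        · rw [div_le_one h1lam]; linarith
    have ycons : ∀ K : Finset (Fin n), Odd K.card → 1 ≤ Hfun K y := by
      intro K hK
      have hx1 := hcons K hK
      have hKaff := haff K
      rcases claimA K hK with h1 | ⟨h3, hlt⟩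
      · rw [h1] at hKaff
        by_contra hylt
        push_neg at hylt
        have := mul_lt_mul_of_pos_left hylt h1lam
        push_cast at hKaff
        linarith
      · have hKg : K ∈ gset := by
          rw [hgset, mem_filter]
          exact ⟨mem_univ K, hK, h3⟩
        have hle := hlam_le_g K hKg
        have hcpos : (0:ℝ) < ((symmDiff K I).card : ℝ) - 1 := by
          have : (3:ℝ) ≤ ((symmDiff K I).card : ℝ) := by exact_mod_cast h3
          linarith
        rw [hg] at hle
        have h2 : lam * (((symmDiff K I).card : ℝ) - 1) ≤ Hfun K x - 1 :=
          (le_div_iff₀ hcpos).mp hle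
        by_contra hylt
        push_neg at hylt
        have := mul_lt_mul_of_pos_left hylt h1lam
        nlinarith
    -- measure facts
    have hintyx : ∀ l, (x l = 0 ∨ x l = 1) → (y l = 0 ∨ y l = 1) := by
      intro l hl
      rcases hl with h | h
      · have hlI : l ∉ I := by
          intro hmem
          by_cases hlm : l = m
          · subst hlm; exact hm0' h
          · have := (hImem l hlm).mp hmem; linarith
        left
        rw [hy]
        simp [xi, hlI, h]
      · have hlI : l ∈ I := by
          have hlm : l ≠ m := by intro he; subst he; exact hm1' h
          exact (hImem l hlm).mpr (by rw [h]; norm_num)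
        right
        rw [hy]
        simp only [xi, if_pos hlI, mul_one, h]
        field_simp
    have hfsub : fracs y ⊆ fracs x := by
      intro l hl
      rw [fracs, mem_filter] at hl ⊢
      refine ⟨mem_univ l, ?_⟩
      by_contra hc
      have : x l = 0 ∨ x l = 1 := by tauto
      rcases hintyx l this with h | h
      · exact hl.2.1 h
      · exact hl.2.2 h
    have hloose_y_of_tight : ∀ K : Finset (Fin n), Odd K.card → Hfun K x = 1 → Hfun K y = 1 := by
      intro K hK hx1
      rcases claimA K hK with h1 | ⟨h3, hlt⟩
      · have hKaff := haff K
        rw [h1, hx1] at hKaff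
        push_cast at hKaff
        have : (1 - lam) * Hfun K y = (1 - lam) * 1 := by linarith
        exact mul_left_cancel₀ h1lam.ne' this
      · linarith
    have hlsub : loose y ⊆ loose x := by
      intro K hK
      rw [loose, mem_filter] at hK ⊢
      refine ⟨mem_univ K, hK.2.1, ?_⟩
      intro hx1
      exact hK.2.2 (hloose_y_of_tight K hK.2.1 hx1)
    -- strict decrease
    have hmeas : meas y < meas x := by
      have hmem : lam ∈ (univ.image t') ∪ (gset.image gfun) := Finset.min'_mem A hAne
      have hfle := Finset.card_le_card hfsub
      have hlle := Finset.card_le_card hlsub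
      rcases Finset.mem_union.mp hmem with h | h
      · -- a coordinate becomes integral
        obtain ⟨l, -, hl⟩ := Finset.mem_image.mp h
        have hlam_eq : t' l = lam := hl
        have hlx : l ∈ fracs x := by
          rw [fracs, mem_filter]
          refine ⟨mem_univ l, ?_, ?_⟩
          · intro h0
            have hlI : l ∉ I := by
              intro hmem
              by_cases hlm : l = m
              · subst hlm; exact hm0' h0
              · have := (hImem l hlm).mp hmem; linarith
            simp only [ht', if_neg hlI, h0, sub_zero] at hlam_eq
            linarith
          · intro h1
            have hlI : l ∈ I := by
              have hlm : l ≠ m := by intro he; subst he; exact hm1' h1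
              exact (hImem l hlm).mpr (by rw [h1]; norm_num)
            simp only [ht', if_pos hlI, h1] at hlam_eq
            linarith
        have hly : l ∉ fracs y := by
          rw [fracs, mem_filter]
          push_neg
          intro _
          by_cases hlI : l ∈ I
          · intro h0
            exfalso
            apply h0
            simp only [ht', if_pos hlI] at hlam_eq
            rw [hy]
            simp [xi, hlI, hlam_eq]
          · intro _
            simp only [ht', if_neg hlI] at hlam_eq
            rw [hy]
            simp only [xi, if_neg hlI, mul_zero, sub_zero]
            have : x l = 1 - lam := by linarith
            rw [this]
            field_simp
        have hflt : (fracs y).card < (fracs x).card :=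
          Finset.card_lt_card (Finset.ssubset_iff_of_subset hfsub |>.mpr ⟨l, hlx, hly⟩)
        have h2n := loose_card_le y
        simp only [meas]
        calc (fracs y).card * (2 ^ n + 1) + (loose y).card
            ≤ (fracs y).card * (2 ^ n + 1) + 2 ^ n := by omega
          _ < ((fracs y).card + 1) * (2 ^ n + 1) := by ring_nf; omega
          _ ≤ (fracs x).card * (2 ^ n + 1) := Nat.mul_le_mul_right _ (by omega)
          _ ≤ (fracs x).card * (2 ^ n + 1) + (loose x).card := Nat.le_add_right _ _
      · -- a constraint becomes tight
        obtain ⟨K, hKg, hl⟩ := Finset.mem_image.mp h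
        obtain ⟨hlt, h3, hKo⟩ := hgsetlt K hKg
        have hKx : K ∈ loose x := by
          rw [loose, mem_filter]
          exact ⟨mem_univ K, hKo, by linarith⟩
        have hKy : K ∉ loose y := by
          rw [loose, mem_filter]
          push_neg
          intro _ _
          -- Hfun K y = 1
          have hcpos : (0:ℝ) < ((symmDiff K I).card : ℝ) - 1 := by
            have : (3:ℝ) ≤ ((symmDiff K I).card : ℝ) := by exact_mod_cast h3
            linarith
          have heq : lam * (((symmDiff K I).card : ℝ) - 1) = Hfun K x - 1 := by
            rw [← hl, hg]
            field_simp
          have hKaff := haff K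
          have : (1 - lam) * Hfun K y = (1 - lam) * 1 := by linarith
          exact mul_left_cancel₀ h1lam.ne' this
        have hllt : (loose y).card < (loose x).card :=
          Finset.card_lt_card (Finset.ssubset_iff_of_subset hlsub |>.mpr ⟨K, hKx, hKy⟩)
        have hmul : (fracs y).card * (2 ^ n + 1) ≤ (fracs x).card * (2 ^ n + 1) :=
          Nat.mul_le_mul_right _ hfle
        simp only [meas]
        omega
    -- conclude
    have hyDem : y ∈ DemiCube n :=
      ih (meas y) (lt_of_lt_of_le hmeas hmx) y le_rfl ybox ycons
    have hvDem : xi I ∈ DemiCube n := subset_convexHull ℝ _ ⟨I, hIeven, rfl⟩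
    rw [hxy]
    exact (convex_convexHull ℝ _) hvDem hyDem hlam_pos.le h1lam.le (by ring)

theorem stmt_1 (n : ℕ) (hn : 0 < n) :
    DemiCube n =
      {x : Fin n → ℝ | (∀ i, 0 ≤ x i ∧ x i ≤ 1) ∧
        ∀ I : Finset (Fin n), Odd I.card → 1 ≤ Hfun I x} := by
  apply Set.Subset.antisymm
  · -- easy direction
    apply convexHull_min
    · rintro _ ⟨I, hI, rfl⟩
      constructor
      · intro i
        by_cases h : i ∈ I <;> simp [xi, h]
      · intro K hK
        rw [Hfun_xi]
        have hodd := symmDiff_parity K I hK hI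
        have : 1 ≤ (symmDiff K I).card := by
          rcases hodd with ⟨k, hk⟩; omega
        exact_mod_cast this
    · intro x hx z hz a b ha hb hab
      constructor
      · intro i
        have hx1 := hx.1 i
        have hz1 := hz.1 i
        simp only [Pi.add_apply, Pi.smul_apply, smul_eq_mul]
        constructor
        · nlinarith
        · nlinarith
      · intro K hK
        rw [Hfun_affine K x z a b hab]
        have h1 := hx.2 K hK
        have h2 := hz.2 K hK
        nlinarith
  · intro x hx
    exact hard_dir hn (meas x) x le_rfl hx.1 hx.2
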